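/- (Differential inequality for the regularized flow) Under the dynamics Ṡ + β∇R(S) + S = M, with R and ∇R as defined, there holds for all t where R(S(t)) > 0: (1/2) d/dt ‖S−M‖_F² + 2βR(S) + (1/2)‖S−M‖_F² ≤ 2β(1+2β)‖M‖_F². -/

import Mathlib

open Matrix BigOperators

noncomputable def frob {m n : ℕ} (A : Matrix (Fin m) (Fin n) ℝ) : ℝ :=
  Real.sqrt (∑ i, ∑ j, (A i j) ^ 2)

noncomputable def finner {m n : ℕ} (A B : Matrix (Fin m) (Fin n) ℝ) : ℝ :=
  (Bᵀ * A).trace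

noncomputable def Rreg {r : ℕ} (S : Matrix (Fin r) (Fin r) ℝ) : ℝ :=
  frob (Sᵀ * S - ((frob S) ^ 2 / (r : ℝ)) • 1)

noncomputable def sv {r : ℕ} (S : Matrix (Fin r) (Fin r) ℝ) (i : Fin r) : ℝ :=
  Real.sqrt ((Matrix.isHermitian_conjTranspose_mul_self S).eigenvalues i)

noncomputable def gradR {r : ℕ} (S : Matrix (Fin r) (Fin r) ℝ) : Matrix (Fin r) (Fin r) ℝ :=
  (2 / Rreg S) • (S * (Sᵀ * S - ((frob S) ^ 2 / (r : ℝ)) • 1))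

attribute [local instance] Matrix.frobeniusNormedAddCommGroup Matrix.frobeniusNormedSpace

section Aux

variable {m n r : ℕ}

lemma frob_nonneg (A : Matrix (Fin m) (Fin n) ℝ) : 0 ≤ frob A := Real.sqrt_nonneg _

lemma frob_sq (A : Matrix (Fin m) (Fin n) ℝ) : frob A ^ 2 = ∑ i, ∑ j, (A i j) ^ 2 :=
  Real.sq_sqrt (by positivity)

lemma frob_eq_norm (A : Matrix (Fin m) (Fin n) ℝ) : frob A = ‖A‖ := by
  rw [Matrix.frobenius_norm_def, frob]
  simp [Real.norm_eq_abs, sq_abs]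
  rw [Real.sqrt_eq_rpow, one_div]

lemma finner_eq_sum (A B : Matrix (Fin m) (Fin n) ℝ) :
    finner A B = ∑ i, ∑ j, A i j * B i j := by
  rw [finner, Matrix.trace]
  simp only [Matrix.diag_apply, Matrix.mul_apply, Matrix.transpose_apply]
  rw [Finset.sum_comm]
  exact Finset.sum_congr rfl fun i _ => Finset.sum_congr rfl fun j _ => mul_comm _ _

lemma finner_self (A : Matrix (Fin m) (Fin n) ℝ) : finner A A = frob A ^ 2 := by
  rw [finner_eq_sum, frob_sq]
  exact Finset.sum_congr rfl fun i _ => Finset.sum_congr rfl fun j _ => (sq (A i j)).symm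

lemma finner_comm (A B : Matrix (Fin m) (Fin n) ℝ) : finner A B = finner B A := by
  rw [finner_eq_sum, finner_eq_sum]
  exact Finset.sum_congr rfl fun i _ => Finset.sum_congr rfl fun j _ => mul_comm _ _

lemma finner_smul_left (c : ℝ) (A B : Matrix (Fin m) (Fin n) ℝ) :
    finner (c • A) B = c * finner A B := by
  simp [finner_eq_sum, Finset.mul_sum, mul_assoc]

lemma finner_sub_right (A B C : Matrix (Fin m) (Fin n) ℝ) :
    finner A (B - C) = finner A B - finner A C := by
  simp only [finner_eq_sum, Matrix.sub_apply, ← Finset.sum_sub_distrib]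
  exact Finset.sum_congr rfl fun i _ => Finset.sum_congr rfl fun j _ => by ring

lemma finner_le_frob (A B : Matrix (Fin m) (Fin n) ℝ) : finner A B ≤ frob A * frob B := by
  rw [finner_eq_sum, frob, frob, ← Fintype.sum_prod_type' (f := fun i j => A i j * B i j),
    ← Fintype.sum_prod_type' (f := fun i j => A i j ^ 2),
    ← Fintype.sum_prod_type' (f := fun i j => B i j ^ 2)]
  exact Real.sum_mul_le_sqrt_mul_sqrt _ _ _

lemma frob_smul (c : ℝ) (A : Matrix (Fin m) (Fin n) ℝ) : frob (c • A) = |c| * frob A := by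
  rw [frob_eq_norm, frob_eq_norm, norm_smul, Real.norm_eq_abs]

lemma frob_mul_le (A B : Matrix (Fin r) (Fin r) ℝ) : frob (A * B) ≤ frob A * frob B := by
  rw [frob_eq_norm, frob_eq_norm, frob_eq_norm]
  exact Matrix.frobenius_norm_mul A B

lemma frob_le_sub_add (A M : Matrix (Fin m) (Fin n) ℝ) : frob A ≤ frob (A - M) + frob M := by
  rw [frob_eq_norm, frob_eq_norm, frob_eq_norm]
  calc ‖A‖ = ‖(A - M) + M‖ := by rw [sub_add_cancel]
    _ ≤ ‖A - M‖ + ‖M‖ := norm_add_le _ _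

lemma trace_transpose_mul_self (A : Matrix (Fin r) (Fin r) ℝ) :
    (Aᵀ * A).trace = frob A ^ 2 := by
  rw [frob_sq, Matrix.trace]
  simp only [Matrix.diag_apply, Matrix.mul_apply, Matrix.transpose_apply]
  rw [Finset.sum_comm]
  exact Finset.sum_congr rfl fun i _ => Finset.sum_congr rfl fun j _ => (sq (A i j)).symm

lemma finner_gradR_self (hr : r ≠ 0) (A : Matrix (Fin r) (Fin r) ℝ) (h : 0 < Rreg A) :
    finner (gradR A) A = 2 * Rreg A := by
  set α : ℝ := frob A ^ 2 / (r : ℝ) with hα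
  set E : Matrix (Fin r) (Fin r) ℝ := Aᵀ * A - α • 1 with hEdef
  have hRE : Rreg A = frob E := rfl
  have hAE : Aᵀ * A = E + α • 1 := by rw [hEdef, sub_add_cancel]
  have htrE : E.trace = 0 := by
    rw [hEdef, Matrix.trace_sub, Matrix.trace_smul, Matrix.trace_one,
      trace_transpose_mul_self, hα]
    have : (r : ℝ) ≠ 0 := Nat.cast_ne_zero.mpr hr
    field_simp
    rw [Fintype.card_fin, smul_eq_mul, div_mul_cancel₀ _ this, sub_self]
  have hsym : Eᵀ = E := by
    rw [hEdef]
    simp [Matrix.transpose_sub, Matrix.transpose_mul, Matrix.transpose_smul]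
  have hEE : finner (A * E) A = Rreg A ^ 2 := by
    have h1 : finner (A * E) A = ((Aᵀ * A) * E).trace := by
      rw [finner, Matrix.mul_assoc]
    rw [h1, hAE, Matrix.add_mul, Matrix.trace_add, Matrix.smul_mul, Matrix.one_mul,
      Matrix.trace_smul, htrE, smul_zero, add_zero]
    have h2 : (E * E).trace = finner E E := by rw [finner, hsym]
    rw [h2, finner_self, hRE]
  have hG : gradR A = (2 / Rreg A) • (A * E) := rfl
  rw [hG, finner_smul_left, hEE]
  field_simp

lemma frob_gradR_le (A : Matrix (Fin r) (Fin r) ℝ) (h : 0 < Rreg A) :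
    frob (gradR A) ≤ 2 * frob A := by
  set E : Matrix (Fin r) (Fin r) ℝ := Aᵀ * A - (frob A ^ 2 / (r : ℝ)) • 1 with hEdef
  have hRE : Rreg A = frob E := rfl
  have hG : gradR A = (2 / Rreg A) • (A * E) := rfl
  rw [hG, frob_smul, abs_of_pos (by positivity)]
  have h1 : frob (A * E) ≤ frob A * frob E := frob_mul_le _ _
  calc 2 / Rreg A * frob (A * E) ≤ 2 / Rreg A * (frob A * frob E) := by
        apply mul_le_mul_of_nonneg_left h1 (by positivity)
    _ = 2 * frob A := by rw [← hRE]; field_simp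

/-- entry evaluation as a continuous linear map -/
noncomputable def entryCLM (i : Fin r) (j : Fin r) :
    Matrix (Fin r) (Fin r) ℝ →L[ℝ] ℝ :=
  LinearMap.toContinuousLinearMap
    { toFun := fun A => A i j
      map_add' := fun _ _ => rfl
      map_smul' := fun _ _ => rfl }

end Aux

theorem stmt13 {r : ℕ} (β t : ℝ) (hβ : 0 < β) (M : Matrix (Fin r) (Fin r) ℝ)
    (S : ℝ → Matrix (Fin r) (Fin r) ℝ)
    (hpos : 0 < Rreg (S t))
    (hode : HasDerivAt S (M - S t - β • gradR (S t)) t)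
    (d : ℝ) (hd : HasDerivAt (fun τ => frob (S τ - M) ^ 2) d t) :
    (1 / 2) * d + 2 * β * Rreg (S t) + (1 / 2) * frob (S t - M) ^ 2
      ≤ 2 * β * (1 + 2 * β) * frob M ^ 2 := by
  have hr : r ≠ 0 := by
    rintro rfl
    rw [Rreg, frob] at hpos
    simp at hpos
  set A := S t with hA
  set G := gradR A with hG
  set V : Matrix (Fin r) (Fin r) ℝ := M - A - β • G with hV
  -- entrywise derivatives
  have hentry : ∀ i j, HasDerivAt (fun τ => S τ i j) (V i j) t := by
    intro i j
    have := (entryCLM i j).hasFDerivAt.comp_hasDerivAt t hode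
    exact this
  -- derivative of the sum of squares
  have hsum : HasDerivAt (fun τ => ∑ i, ∑ j, (S τ i j - M i j) ^ 2)
      (∑ i, ∑ j, 2 * (S t i j - M i j) * V i j) t := by
    apply HasDerivAt.fun_sum
    intro i _
    apply HasDerivAt.fun_sum
    intro j _
    have h1 := ((hentry i j).sub_const (M i j)).fun_pow 2
    simpa using h1
  have heq : (fun τ => frob (S τ - M) ^ 2) = fun τ => ∑ i, ∑ j, (S τ i j - M i j) ^ 2 := by
    funext τ
    rw [frob_sq]
    exact Finset.sum_congr rfl fun i _ => Finset.sum_congr rfl fun j _ => by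
      rw [Matrix.sub_apply]
  rw [heq] at hd
  have hde : d = ∑ i, ∑ j, 2 * (S t i j - M i j) * V i j := hd.unique hsum
  have hd2 : d = 2 * finner (A - M) V := by
    rw [hde, finner_eq_sum, Finset.mul_sum]
    refine Finset.sum_congr rfl fun i _ => ?_
    rw [Finset.mul_sum]
    refine Finset.sum_congr rfl fun j _ => ?_
    rw [Matrix.sub_apply, ← hA]
    ring
  -- expand the inner product
  have hexp : finner (A - M) V = -(frob (A - M) ^ 2) - β * (2 * Rreg A - finner G M) := by
    have h1 : V = (M - A) - β • G := by rw [hV]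
    have h2 : finner (A - M) V = finner (A - M) (M - A) - β * finner G (A - M) := by
      rw [h1, finner_sub_right, finner_comm (A - M) (β • G), finner_smul_left]
    have h3 : finner (A - M) (M - A) = -(frob (A - M) ^ 2) := by
      rw [← neg_sub A M, ← finner_self]
      simp only [finner_eq_sum, Matrix.neg_apply, ← Finset.sum_neg_distrib]
      exact Finset.sum_congr rfl fun i _ => Finset.sum_congr rfl fun j _ => by ring
    have h4 : finner G (A - M) = 2 * Rreg A - finner G M := by
      rw [finner_sub_right, hG, finner_gradR_self hr A hpos]
    rw [h2, h3, h4]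
  -- bounds
  have hGM : finner G M ≤ 2 * (frob (A - M) + frob M) * frob M := by
    calc finner G M ≤ frob G * frob M := finner_le_frob _ _
      _ ≤ (2 * frob A) * frob M :=
          mul_le_mul_of_nonneg_right (frob_gradR_le A hpos) (frob_nonneg _)
      _ ≤ 2 * (frob (A - M) + frob M) * frob M := by
          apply mul_le_mul_of_nonneg_right _ (frob_nonneg _)
          have := frob_le_sub_add A M
          linarith
  have hXnn := frob_nonneg (A - M)
  have hYnn := frob_nonneg M
  rw [hd2, hexp]
  nlinarith [sq_nonneg (frob (A - M) - 2 * β * frob M), sq_nonneg (frob M), hβ.le,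
    mul_pos hβ hβ]
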